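/- Let X be a Hermitian operator and σ a positive definite operator on a finite-dimensional Hilbert space A. Then ‖X‖₁ ≤ √(Tr σ) · ‖σ^{−1/4} X σ^{−1/4}‖₂, where ‖·‖₁ is the trace norm and ‖·‖₂ the Hilbert–Schmidt norm. -/

import Mathlib

open scoped ComplexOrder

namespace Matrix.PosSemidef
variable {n 𝕜 : Type*} [Fintype n] [RCLike 𝕜] [DecidableEq n] {A : Matrix n n 𝕜}
noncomputable def sqrt (hA : A.PosSemidef) : Matrix n n 𝕜 :=
  hA.1.eigenvectorUnitary.1 * diagonal ((↑) ∘ (√·) ∘ hA.1.eigenvalues) *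
  (star hA.1.eigenvectorUnitary : Matrix n n 𝕜)
lemma posSemidef_sqrt (hA : A.PosSemidef) : PosSemidef hA.sqrt := by
  apply PosSemidef.mul_mul_conjTranspose_same
  refine posSemidef_diagonal_iff.mpr fun i ↦ ?_
  rw [Function.comp_apply, RCLike.nonneg_iff]
  constructor
  · simp only [RCLike.ofReal_re]
    exact Real.sqrt_nonneg _
  · simp only [RCLike.ofReal_im]
end Matrix.PosSemidef

namespace Matrix.PosSemidef
variable {n 𝕜 : Type*} [Fintype n] [RCLike 𝕜] [DecidableEq n]

lemma spectrum_nonneg' {A : Matrix n n 𝕜} (hA : A.PosSemidef) {x : ℝ}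
    (hx : x ∈ spectrum ℝ A) : 0 ≤ x := by
  rw [hA.1.spectrum_real_eq_range_eigenvalues] at hx
  obtain ⟨i, rfl⟩ := hx
  exact hA.eigenvalues_nonneg i

lemma sqrt_eq_cfc' {A : Matrix n n 𝕜} (hA : A.PosSemidef) : hA.sqrt = cfc Real.sqrt A := by
  rw [hA.1.cfc_eq, IsHermitian.cfc, Unitary.conjStarAlgAut_apply]
  rfl

lemma sqrt_mul_self {A : Matrix n n 𝕜} (hA : A.PosSemidef) : hA.sqrt * hA.sqrt = A := by
  have hsa : IsSelfAdjoint A := hA.1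
  rw [sqrt_eq_cfc', ← cfc_mul Real.sqrt Real.sqrt A]
  conv_rhs => rw [← cfc_id' ℝ A hsa]
  exact cfc_congr fun x hx => Real.mul_self_sqrt (hA.spectrum_nonneg' hx)

lemma eq_sqrt_of_sq_eq {B : Matrix n n 𝕜} (hB : B.PosSemidef) {A : Matrix n n 𝕜}
    (hA : A.PosSemidef) (h : B ^ 2 = A) : B = hA.sqrt := by
  have hsa : IsSelfAdjoint B := hB.1
  rw [sqrt_eq_cfc', ← h, ← cfc_comp_pow Real.sqrt 2 B (by fun_prop) hsa]
  conv_lhs => rw [← cfc_id' ℝ B hsa]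
  exact cfc_congr fun x hx => (Real.sqrt_sq (hB.spectrum_nonneg' hx)).symm

end Matrix.PosSemidef

/-- The trace norm `‖M‖₁ = Tr √(MᴴM)`. -/
noncomputable def traceNorm {n : Type*} [Fintype n] [DecidableEq n]
    (M : Matrix n n ℂ) : ℝ :=
  ((Matrix.posSemidef_conjTranspose_mul_self M).sqrt).trace.re

/-- The Hilbert–Schmidt norm `‖M‖₂ = √(Tr(MᴴM))`. -/
noncomputable def hsNorm {n : Type*} [Fintype n] (M : Matrix n n ℂ) : ℝ :=
  Real.sqrt ((M.conjTranspose * M).trace.re)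

/-- The inverse fourth root `σ^{-1/4}` of a positive definite matrix `σ`, obtained as the
positive square root of the positive square root of `σ⁻¹`. -/
noncomputable def invFourthRoot {n : Type*} [Fintype n] [DecidableEq n]
    {σ : Matrix n n ℂ} (hσ : σ.PosDef) : Matrix n n ℂ :=
  hσ.inv.posSemidef.posSemidef_sqrt.sqrt

section Aux

open Matrix Finset

variable {n : Type*} [Fintype n]

lemma re_trace_conjTranspose_mul_self (A : Matrix n n ℂ) :
    ((Aᴴ * A).trace).re = ∑ j, ∑ i, ‖A i j‖ ^ 2 := by
  have : (Aᴴ * A).trace = ∑ j, ∑ i, ((‖A i j‖ : ℂ) ^ 2) := by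
    simp only [Matrix.trace, Matrix.diag, Matrix.mul_apply, Matrix.conjTranspose_apply]
    refine Finset.sum_congr rfl fun j _ => Finset.sum_congr rfl fun i _ => ?_
    simpa [mul_comm] using Complex.mul_conj' (A i j)
  rw [this]
  push_cast [Complex.re_sum]
  simp [← Complex.ofReal_pow]

lemma re_trace_conjTranspose_mul_self_nonneg (A : Matrix n n ℂ) :
    0 ≤ ((Aᴴ * A).trace).re := by
  rw [re_trace_conjTranspose_mul_self]
  positivity

lemma hsNorm_nonneg (A : Matrix n n ℂ) : 0 ≤ hsNorm A := Real.sqrt_nonneg _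

lemma hsNorm_sq (A : Matrix n n ℂ) : hsNorm A ^ 2 = ((Aᴴ * A).trace).re :=
  Real.sq_sqrt (re_trace_conjTranspose_mul_self_nonneg A)

lemma hsNorm_conjTranspose (A : Matrix n n ℂ) : hsNorm Aᴴ = hsNorm A := by
  unfold hsNorm
  rw [conjTranspose_conjTranspose, Matrix.trace_mul_comm]

/-- Cauchy–Schwarz for the Hilbert–Schmidt inner product. -/
lemma abs_re_trace_le_hsNorm_mul_hsNorm (A B : Matrix n n ℂ) :
    |((Aᴴ * B).trace).re| ≤ hsNorm A * hsNorm B := by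
  have htr : ((Aᴴ * B).trace).re
      = ∑ j, ∑ i, ((starRingEnd ℂ) (A i j) * B i j).re := by
    simp only [Matrix.trace, Matrix.diag, Matrix.mul_apply, Matrix.conjTranspose_apply,
      Complex.re_sum]
    rfl
  have h1 : |((Aᴴ * B).trace).re| ≤ ∑ j, ∑ i, ‖A i j‖ * ‖B i j‖ := by
    rw [htr]
    refine (Finset.abs_sum_le_sum_abs _ _).trans ?_
    refine Finset.sum_le_sum fun j _ => ?_
    refine (Finset.abs_sum_le_sum_abs _ _).trans ?_
    refine Finset.sum_le_sum fun i _ => ?_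
    calc |((starRingEnd ℂ) (A i j) * B i j).re| ≤ ‖(starRingEnd ℂ) (A i j) * B i j‖ :=
          Complex.abs_re_le_norm _
      _ = ‖A i j‖ * ‖B i j‖ := by rw [norm_mul, RCLike.norm_conj]
  refine h1.trans ?_
  have h2 : ∑ j, ∑ i, ‖A i j‖ * ‖B i j‖
      = ∑ p : n × n, ‖A p.2 p.1‖ * ‖B p.2 p.1‖ := by
    rw [Fintype.sum_prod_type]
  have h3 := Real.sum_mul_le_sqrt_mul_sqrt (Finset.univ : Finset (n × n))
    (fun p => ‖A p.2 p.1‖) (fun p => ‖B p.2 p.1‖)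
  rw [h2]
  refine h3.trans (le_of_eq ?_)
  congr 1
  · unfold hsNorm
    rw [re_trace_conjTranspose_mul_self, Fintype.sum_prod_type]
  · unfold hsNorm
    rw [re_trace_conjTranspose_mul_self, Fintype.sum_prod_type]

lemma sqrt_congr {n : Type*} [Fintype n] [DecidableEq n] {A B : Matrix n n ℂ} (h : A = B)
    (hA : A.PosSemidef) (hB : B.PosSemidef) : hA.sqrt = hB.sqrt := by
  subst h; rfl

end Aux

set_option maxHeartbeats 1000000 in
/-- For a Hermitian operator `X` and a positive definite operator `σ` on a
finite-dimensional Hilbert space, `‖X‖₁ ≤ √(Tr σ) · ‖σ^{−1/4} X σ^{−1/4}‖₂`. -/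
theorem traceNorm_le_sqrt_trace_mul_hsNorm {n : Type*} [Fintype n] [DecidableEq n]
    (X σ : Matrix n n ℂ) (hX : X.IsHermitian) (hσ : σ.PosDef) :
    traceNorm X ≤
      Real.sqrt (σ.trace.re) * hsNorm (invFourthRoot hσ * X * invFourthRoot hσ) := by
  classical
  open Matrix in
  -- the unitary diagonalizing X, eigenvalues d, sign matrix S
  set V : Matrix n n ℂ := (hX.eigenvectorUnitary : Matrix n n ℂ) with hVdef
  have hVV' : V * Vᴴ = 1 := by
    rw [← Matrix.star_eq_conjTranspose]
    exact (Matrix.mem_unitaryGroup_iff).mp hX.eigenvectorUnitary.2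
  have hV'V : Vᴴ * V = 1 := by
    rw [← Matrix.star_eq_conjTranspose]
    exact (Matrix.mem_unitaryGroup_iff').mp hX.eigenvectorUnitary.2
  set d : n → ℝ := hX.eigenvalues with hddef
  set s : n → ℂ := fun i => if d i < 0 then -1 else 1 with hsdef
  set S : Matrix n n ℂ := V * Matrix.diagonal s * Vᴴ with hSdef
  have hspec : X = V * Matrix.diagonal (fun i => (d i : ℂ)) * Vᴴ := by
    have h := hX.spectral_theorem
    rw [Unitary.conjStarAlgAut_apply, Matrix.star_eq_conjTranspose] at h
    exact h
  -- basic facts about S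
  have hsstar : ∀ i, (starRingEnd ℂ) (s i) = s i := by
    intro i; by_cases h : d i < 0 <;> simp [hsdef, h]
  have hSH : Sᴴ = S := by
    rw [hSdef, Matrix.conjTranspose_mul, Matrix.conjTranspose_mul,
      Matrix.conjTranspose_conjTranspose, Matrix.diagonal_conjTranspose]
    have : star s = s := by funext i; exact hsstar i
    rw [this, Matrix.mul_assoc]
  have hss : ∀ i, s i * s i = 1 := by
    intro i; simp only [hsdef]; split <;> ring
  have hconj : ∀ A B : Matrix n n ℂ,
      (V * A * Vᴴ) * (V * B * Vᴴ) = V * (A * B) * Vᴴ := by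
    intro A B
    calc (V * A * Vᴴ) * (V * B * Vᴴ) = V * (A * ((Vᴴ * V) * (B * Vᴴ))) := by
          simp only [Matrix.mul_assoc]
      _ = V * (A * B) * Vᴴ := by rw [hV'V, Matrix.one_mul]; simp only [Matrix.mul_assoc]
  have hSS : S * S = 1 := by
    rw [hSdef, hconj, Matrix.diagonal_mul_diagonal]
    have : (fun i => s i * s i) = fun _ => (1 : ℂ) := funext hss
    rw [this, Matrix.diagonal_one, Matrix.mul_one, hVV']
  -- S * X is the positive square root of XᴴX
  have hsd : ∀ i, s i * (d i : ℂ) = ((|d i| : ℝ) : ℂ) := by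
    intro i
    by_cases h : d i < 0
    · simp only [hsdef, if_pos h, abs_of_neg h]; push_cast; ring
    · simp only [hsdef, if_neg h, abs_of_nonneg (not_lt.mp h)]; ring
  have hSX : S * X = V * Matrix.diagonal (fun i => ((|d i| : ℝ) : ℂ)) * Vᴴ := by
    rw [hSdef, hspec, hconj, Matrix.diagonal_mul_diagonal]
    exact congrArg (fun f => V * Matrix.diagonal f * Vᴴ) (funext hsd)
  have habs_psd : (V * Matrix.diagonal (fun i => ((|d i| : ℝ) : ℂ)) * Vᴴ).PosSemidef := by
    refine Matrix.PosSemidef.mul_mul_conjTranspose_same ?_ V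
    refine Matrix.posSemidef_diagonal_iff.mpr fun i => ?_
    exact_mod_cast Complex.zero_le_real.mpr (abs_nonneg _)
  have hsq : (V * Matrix.diagonal (fun i => ((|d i| : ℝ) : ℂ)) * Vᴴ) ^ 2 = Xᴴ * X := by
    rw [hX.eq, hspec, pow_two, hconj, hconj, Matrix.diagonal_mul_diagonal,
      Matrix.diagonal_mul_diagonal]
    refine congrArg (fun f => V * Matrix.diagonal f * Vᴴ) (funext fun i => ?_)
    rw [← Complex.ofReal_mul, ← Complex.ofReal_mul, abs_mul_abs_self]
  have hkey : S * X = (Matrix.posSemidef_conjTranspose_mul_self X).sqrt := by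
    rw [hSX]
    exact habs_psd.eq_sqrt_of_sq_eq _ hsq
  have htraceNorm : traceNorm X = ((S * X).trace).re := by
    rw [traceNorm, hkey]
  -- the fourth root R of σ
  set Q : Matrix n n ℂ := hσ.posSemidef.sqrt with hQdef
  set R : Matrix n n ℂ := hσ.posSemidef.posSemidef_sqrt.sqrt with hRdef
  have hR2 : R * R = Q := hσ.posSemidef.posSemidef_sqrt.sqrt_mul_self
  have hQ2 : Q * Q = σ := hσ.posSemidef.sqrt_mul_self
  have hRpsd : R.PosSemidef := hσ.posSemidef.posSemidef_sqrt.posSemidef_sqrt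
  have hRH : Rᴴ = R := hRpsd.1
  have hdetσ : σ.det ≠ 0 := hσ.det_pos.ne'
  have hdetR : R.det ≠ 0 := by
    intro h
    apply hdetσ
    rw [← hQ2, ← hR2, Matrix.det_mul, Matrix.det_mul, h]
    ring
  have hRR' : R * R⁻¹ = 1 := Matrix.mul_nonsing_inv R (isUnit_iff_ne_zero.mpr hdetR)
  have hR'R : R⁻¹ * R = 1 := Matrix.nonsing_inv_mul R (isUnit_iff_ne_zero.mpr hdetR)
  -- invFourthRoot hσ = R⁻¹
  have hQinv : (hσ.inv.posSemidef).sqrt = Q⁻¹ := by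
    refine ((hσ.posSemidef.posSemidef_sqrt.inv).eq_sqrt_of_sq_eq hσ.inv.posSemidef ?_).symm
    rw [pow_two, ← Matrix.mul_inv_rev, hQ2]
  have hIF : invFourthRoot hσ = R⁻¹ := by
    have h1 : invFourthRoot hσ = ((hσ.posSemidef.posSemidef_sqrt.inv)).sqrt := by
      rw [invFourthRoot]
      exact sqrt_congr hQinv _ _
    rw [h1]
    refine (hRpsd.inv.eq_sqrt_of_sq_eq _ ?_).symm
    rw [pow_two, ← Matrix.mul_inv_rev, hR2]
  set Y : Matrix n n ℂ := invFourthRoot hσ * X * invFourthRoot hσ with hYdef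
  have hXRYR : X = R * Y * R := by
    rw [hYdef, hIF]
    calc X = (R * R⁻¹) * X * (R⁻¹ * R) := by rw [hRR', hR'R, Matrix.one_mul, Matrix.mul_one]
      _ = R * (R⁻¹ * X * R⁻¹) * R := by simp only [Matrix.mul_assoc]
  -- trace identity
  have htr1 : ((S * X).trace) = (((R * S * R) * Y).trace) := by
    conv_lhs => rw [hXRYR]
    rw [show S * (R * Y * R) = (S * (R * Y)) * R from by simp only [Matrix.mul_assoc],
      Matrix.trace_mul_comm,
      show R * (S * (R * Y)) = (R * S * R) * Y from by simp only [Matrix.mul_assoc]]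
  -- Cauchy–Schwarz step
  have hRSRH : (R * S * R)ᴴ = R * S * R := by
    simp only [Matrix.conjTranspose_mul, hRH, hSH, Matrix.mul_assoc]
  have hcs : (((R * S * R) * Y).trace).re ≤ hsNorm (R * S * R) * hsNorm Y := by
    have := abs_re_trace_le_hsNorm_mul_hsNorm (R * S * R) Y
    rw [hRSRH] at this
    exact (le_abs_self _).trans this
  -- bound on hsNorm (R * S * R)
  set T : Matrix n n ℂ := R * R * S with hTdef
  have hTH : Tᴴ = S * (R * R) := by
    rw [hTdef]
    simp only [Matrix.conjTranspose_mul, hRH, hSH, Matrix.mul_assoc]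
  have hTHT : Tᴴ * T = S * σ * S := by
    rw [hTH, hTdef]
    calc S * (R * R) * (R * R * S) = S * ((R * R) * (R * R)) * S := by
          simp only [Matrix.mul_assoc]
      _ = S * σ * S := by rw [hR2, hQ2]
  have hTnorm : hsNorm T ^ 2 = σ.trace.re := by
    rw [hsNorm_sq, hTHT]
    refine congrArg Complex.re ?_
    calc (S * σ * S).trace = (S * (σ * S)).trace := by rw [Matrix.mul_assoc]
      _ = ((σ * S) * S).trace := Matrix.trace_mul_comm _ _
      _ = (σ * (S * S)).trace := by rw [Matrix.mul_assoc]
      _ = σ.trace := by rw [hSS, Matrix.mul_one]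
  have hRSRsq : hsNorm (R * S * R) ^ 2 = ((T * T).trace).re := by
    rw [hsNorm_sq, hRSRH]
    refine congrArg Complex.re ?_
    calc (R * S * R * (R * S * R)).trace = (R * (S * R * (R * S * R))).trace := by
          simp only [Matrix.mul_assoc]
      _ = ((S * R * (R * S * R)) * R).trace := Matrix.trace_mul_comm _ _
      _ = (S * (R * (R * (S * (R * R))))).trace := by simp only [Matrix.mul_assoc]
      _ = ((R * (R * (S * (R * R)))) * S).trace := Matrix.trace_mul_comm _ _
      _ = (T * T).trace := by rw [hTdef]; simp only [Matrix.mul_assoc]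
  have hTT : ((T * T).trace).re ≤ hsNorm T ^ 2 := by
    have := abs_re_trace_le_hsNorm_mul_hsNorm Tᴴ T
    rw [Matrix.conjTranspose_conjTranspose, hsNorm_conjTranspose] at this
    calc ((T * T).trace).re ≤ |((T * T).trace).re| := le_abs_self _
      _ ≤ hsNorm T * hsNorm T := this
      _ = hsNorm T ^ 2 := (pow_two _).symm
  have hRSRle : hsNorm (R * S * R) ≤ Real.sqrt (σ.trace.re) := by
    have h1 : hsNorm (R * S * R) ^ 2 ≤ σ.trace.re := by
      rw [hRSRsq, ← hTnorm]; exact hTT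
    calc hsNorm (R * S * R) = Real.sqrt (hsNorm (R * S * R) ^ 2) :=
          (Real.sqrt_sq (hsNorm_nonneg _)).symm
      _ ≤ Real.sqrt (σ.trace.re) := Real.sqrt_le_sqrt h1
  calc traceNorm X = (((R * S * R) * Y).trace).re := by rw [htraceNorm, htr1]
    _ ≤ hsNorm (R * S * R) * hsNorm Y := hcs
    _ ≤ Real.sqrt (σ.trace.re) * hsNorm Y :=
        mul_le_mul_of_nonneg_right hRSRle (hsNorm_nonneg _)
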